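/- There exist arbitrarily large graphs G with strict majority thresholds such that the minimum size of an ordinary target set in the non-progressive model is Ω(n) while the minimum size of a disjoint timed target set is O(√n); in particular, the minimally required target set size is ω of the minimum disjoint timed target set size. -/

import Mathlib

open Finset
open scoped Classical

variable {V : Type*}

noncomputable def Qseq (G : SimpleGraph V) [Fintype V] (τ : V → ℕ) (S : ℕ → Finset V) :
    ℕ → Finset V
  | 0 => ∅
  | i + 1 => Finset.univ.filter fun v =>
      τ v ≤ (G.neighborFinset v ∩ (S i ∪ Qseq G τ S i)).card

def IsTTS (G : SimpleGraph V) [Fintype V] (τ : V → ℕ) (S : ℕ → Finset V) (k : ℕ) : Prop :=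
  S k = ∅ ∧ Qseq G τ S k = Finset.univ

def ttsSize (S : ℕ → Finset V) (k : ℕ) : ℕ := ∑ i ∈ Finset.range (k + 1), (S i).card

noncomputable def strictMaj (G : SimpleGraph V) [Fintype V] (v : V) : ℕ := (G.degree v + 2) / 2

noncomputable def npStep (G : SimpleGraph V) [Fintype V] (τ : V → ℕ) (A : Finset V) : Finset V :=
  Finset.univ.filter fun v => τ v ≤ (G.neighborFinset v ∩ A).card

def IsTS (G : SimpleGraph V) [Fintype V] (τ : V → ℕ) (S : Finset V) : Prop :=
  ∃ i : ℕ, (npStep G τ)^[i] S = Finset.univ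

noncomputable def MTT (G : SimpleGraph V) [Fintype V] (τ : V → ℕ) : ℕ :=
  sInf {m | ∃ (S : ℕ → Finset V) (k : ℕ), IsTTS G τ S k ∧ ttsSize S k = m}

/-- Vertex type of the tower graph: levels `L_1, …, L_κ` with `|L_i| = i`
(a pair `⟨i, j⟩` with `i : Fin κ` encodes the `j`-th node of level `L_{i+1}`),
plus two extra leaf nodes. -/
def towerV (κ : ℕ) : Type := (Σ i : Fin κ, Fin (i + 1)) ⊕ Fin 2

instance (κ : ℕ) : Fintype (towerV κ) := by unfold towerV; infer_instance

/-- The level of a vertex: level nodes of `L_i` have level `i ∈ {1, …, κ}`, and the two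
leaves have level `0`. -/
def lev {κ : ℕ} : towerV κ → ℕ
  | Sum.inl x => (x.1 : ℕ) + 1
  | Sum.inr _ => 0

/-- The tower graph `G_κ`: each node of `L_i` is adjacent to every node of `L_{i+1}`,
and the two leaves (level `0`) are adjacent exactly to the unique node of `L_1`. -/
def towerGraph (κ : ℕ) : SimpleGraph (towerV κ) where
  Adj a b := lev a + 1 = lev b ∨ lev b + 1 = lev a
  symm := ⟨fun a b h => h.symm⟩
  loopless := ⟨by
    intro a h
    rcases h with h | h <;> omega⟩

/-- The set `L_i` of nodes of level `i` (for `i = 0` this is the pair of leaves). -/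
noncomputable def levelSet (κ : ℕ) (i : ℕ) : Finset (towerV κ) :=
  Finset.univ.filter fun v => lev v = i

/-- A disjoint timed target set: a timed target set whose targeted sets
`S_0, …, S_k` are pairwise disjoint. -/
def IsDTTS (G : SimpleGraph V) [Fintype V] (τ : V → ℕ) (S : ℕ → Finset V) (k : ℕ) : Prop :=
  IsTTS G τ S k ∧
    ∀ i ∈ Finset.range (k + 1), ∀ j ∈ Finset.range (k + 1), i ≠ j → Disjoint (S i) (S j)

/-- Minimum size of a disjoint timed target set. -/
noncomputable def MDTT (G : SimpleGraph V) [Fintype V] (τ : V → ℕ) : ℕ :=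
  sInf {m | ∃ (S : ℕ → Finset V) (k : ℕ), IsDTTS G τ S k ∧ ttsSize S k = m}

/-- Minimum size of an ordinary target set in the non-progressive model. -/
noncomputable def MT (G : SimpleGraph V) [Fintype V] (τ : V → ℕ) : ℕ :=
  sInf {m | ∃ S : Finset V, IsTS G τ S ∧ S.card = m}

section Tower

lemma mem_union_left' {α : Type*} {s : Finset α} (t : Finset α) {a : α} (h : a ∈ s) :
    a ∈ s ∪ t := Finset.mem_union_left t h

lemma mem_union_right' {α : Type*} (s : Finset α) {t : Finset α} {a : α} (h : a ∈ t) :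
    a ∈ s ∪ t := Finset.mem_union_right s h

variable {κ : ℕ}

lemma mem_levelSet {v : towerV κ} {j : ℕ} : v ∈ levelSet κ j ↔ lev v = j := by
  simp [levelSet]

lemma levelSet_disjoint {i j : ℕ} (h : i ≠ j) :
    Disjoint (levelSet κ i) (levelSet κ j) := by
  rw [Finset.disjoint_left]
  intro a ha hb
  rw [mem_levelSet] at ha hb
  omega

lemma towerAdj {a b : towerV κ} :
    (towerGraph κ).Adj a b ↔ (lev a + 1 = lev b ∨ lev b + 1 = lev a) := Iff.rfl

lemma mem_nbr {v u : towerV κ} :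
    u ∈ (towerGraph κ).neighborFinset v ↔ (lev u + 1 = lev v ∨ lev u = lev v + 1) := by
  rw [SimpleGraph.mem_neighborFinset, towerAdj]
  omega

lemma nbr_eq_of_pos {v : towerV κ} (h : 1 ≤ lev v) :
    (towerGraph κ).neighborFinset v = levelSet κ (lev v - 1) ∪ levelSet κ (lev v + 1) := by
  ext u
  rw [mem_nbr, Finset.mem_union, mem_levelSet, mem_levelSet]
  omega

lemma nbr_eq_of_zero {v : towerV κ} (h : lev v = 0) :
    (towerGraph κ).neighborFinset v = levelSet κ 1 := by
  ext u
  rw [mem_nbr, mem_levelSet]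
  omega

lemma levelSet_eq_empty {j : ℕ} (h : κ < j) : levelSet κ j = ∅ := by
  ext v
  simp only [mem_levelSet, Finset.notMem_empty, iff_false]
  cases v with
  | inl x => have := x.1.2; simp only [lev]; omega
  | inr x => simp [lev]; omega

lemma card_levelSet_zero : (levelSet κ 0).card = 2 := by
  apply Finset.card_eq_of_bijective (f := fun i hi => (Sum.inr ⟨i, hi⟩ : towerV κ))
  · intro a ha
    replace ha : lev (a : towerV κ) = 0 := mem_levelSet.mp ha
    cases a with
    | inl x => exact absurd ha (by simp [lev])
    | inr x => exact ⟨x.1, x.2, by simp⟩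
  · intro i hi
    exact mem_levelSet.mpr rfl
  · intro i j hi hj heq
    simpa [Fin.ext_iff] using heq

lemma card_levelSet {j : ℕ} (h1 : 1 ≤ j) (h2 : j ≤ κ) : (levelSet κ j).card = j := by
  apply Finset.card_eq_of_bijective
    (f := fun i hi => (Sum.inl ⟨⟨j - 1, by omega⟩, ⟨i, show i < j - 1 + 1 by omega⟩⟩ : towerV κ))
  · intro a ha
    replace ha : lev (a : towerV κ) = j := mem_levelSet.mp ha
    cases a with
    | inl x =>
        obtain ⟨⟨i₁, hi₁⟩, ⟨a₂, ha₂⟩⟩ := x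
        have ha' : i₁ + 1 = j := ha
        have ha₂' : a₂ < i₁ + 1 := ha₂
        refine ⟨a₂, by omega, ?_⟩
        have : i₁ = j - 1 := by omega
        subst this
        rfl
    | inr x => simp [lev] at ha; omega
  · intro i hi
    refine mem_levelSet.mpr ?_
    show j - 1 + 1 = j
    omega
  · intro i j' hi hj' heq
    simpa using heq

end Tower
section Tower2

variable {κ : ℕ}

lemma mem_npStep {G : SimpleGraph V} [Fintype V] {τ : V → ℕ} {A : Finset V} {v : V} :
    v ∈ npStep G τ A ↔ τ v ≤ ((G.neighborFinset v) ∩ A).card := by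
  simp [npStep]

lemma Qseq_succ (G : SimpleGraph V) [Fintype V] (τ : V → ℕ) (S : ℕ → Finset V) (i : ℕ) :
    Qseq G τ S (i + 1) = npStep G τ (S i ∪ Qseq G τ S i) := rfl

lemma act_of_subset {G : SimpleGraph V} [Fintype V] {τ : V → ℕ} {A X : Finset V} {v : V}
    (hX : X ⊆ G.neighborFinset v) (hA : X ⊆ A) (hτ : τ v ≤ X.card) : v ∈ npStep G τ A :=
  mem_npStep.mpr (hτ.trans (Finset.card_le_card (Finset.subset_inter hX hA)))

lemma lev_le (v : towerV κ) : lev v ≤ κ := by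
  cases v with
  | inl x => have := x.1.2; simp only [lev]; omega
  | inr x => simp [lev]

lemma levelSet_subset_nbr_up (v : towerV κ) :
    levelSet κ (lev v + 1) ⊆ (towerGraph κ).neighborFinset v := fun u hu =>
  mem_nbr.mpr (Or.inr (mem_levelSet.mp hu))

lemma levelSet_subset_nbr_down {v : towerV κ} (h : 1 ≤ lev v) :
    levelSet κ (lev v - 1) ⊆ (towerGraph κ).neighborFinset v := fun u hu => by
  have := mem_levelSet.mp hu
  exact mem_nbr.mpr (Or.inl (by omega))

lemma degree_eq {v : towerV κ} (h : 1 ≤ lev v) :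
    (towerGraph κ).degree v
      = (levelSet κ (lev v - 1)).card + (levelSet κ (lev v + 1)).card := by
  rw [← SimpleGraph.card_neighborFinset_eq_degree, nbr_eq_of_pos h,
    Finset.card_union_of_disjoint (levelSet_disjoint (by omega))]

lemma degree_zero {v : towerV κ} (h : lev v = 0) (hk : 1 ≤ κ) :
    (towerGraph κ).degree v = 1 := by
  rw [← SimpleGraph.card_neighborFinset_eq_degree, nbr_eq_of_zero h, card_levelSet le_rfl hk]

lemma tau_zero {v : towerV κ} (h : lev v = 0) (hk : 1 ≤ κ) :
    strictMaj (towerGraph κ) v = 1 := by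
  rw [strictMaj, degree_zero h hk]

lemma tau_one {v : towerV κ} (h : lev v = 1) (hk : 2 ≤ κ) :
    strictMaj (towerGraph κ) v = 3 := by
  rw [strictMaj, degree_eq (by omega), h]
  norm_num [card_levelSet_zero, card_levelSet (by norm_num : (1:ℕ) ≤ 2) hk]

lemma tau_interior {v : towerV κ} (h2 : 2 ≤ lev v) (hk : lev v + 1 ≤ κ) :
    strictMaj (towerGraph κ) v = lev v + 1 := by
  rw [strictMaj, degree_eq (by omega), card_levelSet (by omega) (by omega),
    card_levelSet (by omega) hk]
  omega

lemma tau_top {v : towerV κ} (h : lev v = κ) (hk : 2 ≤ κ) :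
    strictMaj (towerGraph κ) v = (κ + 1) / 2 := by
  rw [strictMaj, degree_eq (by omega), h,
    card_levelSet (show 1 ≤ κ - 1 by omega) (show κ - 1 ≤ κ by omega),
    levelSet_eq_empty (show κ < κ + 1 by omega)]
  simp only [Finset.card_empty]
  congr 1
  omega

end Tower2
section Tower3

variable {κ : ℕ}

noncomputable def suffix (κ m : ℕ) : Finset (towerV κ) :=
  Finset.univ.filter fun v => m ≤ lev v

lemma mem_suffix {v : towerV κ} {m : ℕ} : v ∈ suffix κ m ↔ m ≤ lev v := by
  simp [suffix]

lemma suffix_mono {m m' : ℕ} (h : m ≤ m') : suffix κ m' ⊆ suffix κ m := fun v hv =>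
  mem_suffix.mpr (h.trans (mem_suffix.mp hv))

lemma levelSet_subset_suffix {j m : ℕ} (h : m ≤ j) : levelSet κ j ⊆ suffix κ m := fun v hv =>
  mem_suffix.mpr (by rw [mem_levelSet.mp hv]; exact h)

lemma descent {m : ℕ} {A : Finset (towerV κ)} (h3 : 3 ≤ m) (hm : m + 1 ≤ κ)
    (hA : suffix κ m ⊆ A) :
    suffix κ (m - 1) ⊆ npStep (towerGraph κ) (strictMaj (towerGraph κ)) A := by
  intro v hv
  have hv' : m - 1 ≤ lev v := mem_suffix.mp hv
  have hle : lev v ≤ κ := lev_le v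
  by_cases hc : lev v = κ
  · refine act_of_subset (levelSet_subset_nbr_down (by omega))
      ((levelSet_subset_suffix (by omega)).trans hA) ?_
    rw [tau_top hc (by omega), card_levelSet (by omega) (by omega)]
    omega
  · refine act_of_subset (levelSet_subset_nbr_up v)
      ((levelSet_subset_suffix (by omega)).trans hA) ?_
    rw [tau_interior (by omega) (by omega), card_levelSet (by omega) (by omega)]

lemma stable {A : Finset (towerV κ)} (hk : 4 ≤ κ) (hA : suffix κ 2 ⊆ A) :
    suffix κ 2 ⊆ npStep (towerGraph κ) (strictMaj (towerGraph κ)) A := by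
  have := descent (m := 3) (by omega) (by omega) ((suffix_mono (by omega)).trans hA)
  simpa using this

end Tower3
section Tower4

variable {κ : ℕ}

noncomputable def sched (κ : ℕ) : ℕ → Finset (towerV κ) := fun i =>
  if i = 0 then levelSet κ κ
  else if i = 2 then levelSet κ (κ - 1)
  else if i = κ then {Sum.inr 0}
  else if i = κ + 1 then {Sum.inr 1}
  else ∅

/-- abbreviation for the tower dynamics -/
noncomputable def Qt (κ : ℕ) : ℕ → Finset (towerV κ) :=
  Qseq (towerGraph κ) (strictMaj (towerGraph κ)) (sched κ)

lemma Qt_succ (i : ℕ) :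
    Qt κ (i + 1) = npStep (towerGraph κ) (strictMaj (towerGraph κ)) (sched κ i ∪ Qt κ i) := rfl

lemma leaf_lev (b : Fin 2) : lev (Sum.inr b : towerV κ) = 0 := rfl

lemma sched_zero : sched κ 0 = levelSet κ κ := by simp [sched]

lemma sched_two (hk : 5 ≤ κ) : sched κ 2 = levelSet κ (κ - 1) := by
  rw [sched]; norm_num

lemma sched_kappa (hk : 5 ≤ κ) : sched κ κ = {Sum.inr 0} := by
  rw [sched]
  rw [if_neg (by omega : ¬ κ = 0), if_neg (by omega : ¬ κ = 2), if_pos rfl]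

lemma sched_kappa1 (hk : 5 ≤ κ) : sched κ (κ + 1) = {Sum.inr 1} := by
  rw [sched]
  rw [if_neg (by omega : ¬ κ + 1 = 0), if_neg (by omega : ¬ κ + 1 = 2),
    if_neg (by omega : ¬ κ + 1 = κ), if_pos rfl]

lemma step1 (hk : 5 ≤ κ) : levelSet κ (κ - 1) ⊆ Qt κ 1 := by
  intro v hv
  have hv' := mem_levelSet.mp hv
  rw [Qt_succ 0]
  refine act_of_subset (X := levelSet κ κ) ?_ ?_ ?_
  · have : levelSet κ κ = levelSet κ (lev v + 1) := by rw [hv']; congr 1; omega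
    rw [this]; exact levelSet_subset_nbr_up v
  · rw [sched_zero]; exact Finset.subset_union_left
  · rw [tau_interior (by omega) (by omega), card_levelSet (by omega) le_rfl, hv']
    omega

lemma step2 (hk : 5 ≤ κ) : levelSet κ κ ⊆ Qt κ 2 := by
  intro v hv
  have hv' := mem_levelSet.mp hv
  rw [Qt_succ 1]
  refine act_of_subset (X := levelSet κ (κ - 1)) ?_ ?_ ?_
  · have : levelSet κ (κ - 1) = levelSet κ (lev v - 1) := by rw [hv']
    rw [this]; exact levelSet_subset_nbr_down (by omega)
  · exact (step1 hk).trans Finset.subset_union_right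
  · rw [tau_top hv' (by omega), card_levelSet (by omega) (by omega)]
    omega

lemma step3 (hk : 5 ≤ κ) : suffix κ (κ - 1) ⊆ sched κ 2 ∪ Qt κ 2 := by
  intro v hv
  have hv' := mem_suffix.mp hv
  have hle := lev_le v
  rcases eq_or_lt_of_le hv' with h | h
  · apply Finset.mem_union_left
    rw [sched_two hk]
    exact mem_levelSet.mpr h.symm
  · exact Finset.mem_union_right _ (step2 hk (mem_levelSet.mpr (by omega)))

lemma step4 (hk : 5 ≤ κ) (j : ℕ) :
    suffix κ (max (κ - 1 - j) 2) ⊆ sched κ (2 + j) ∪ Qt κ (2 + j) := by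
  induction j with
  | zero => simpa [show max (κ - 1) 2 = κ - 1 by omega] using step3 hk
  | succ j ih =>
      refine Finset.Subset.trans ?_ Finset.subset_union_right
      rw [show 2 + (j + 1) = (2 + j) + 1 from rfl, Qt_succ]
      by_cases hc : 3 ≤ κ - 1 - j
      · have hAm : suffix κ (κ - 1 - j) ⊆ sched κ (2 + j) ∪ Qt κ (2 + j) := by
          rw [show max (κ - 1 - j) 2 = κ - 1 - j by omega] at ih; exact ih
        have hd := descent (m := κ - 1 - j) (by omega) (by omega) hAm
        exact Finset.Subset.trans (suffix_mono (by omega)) hd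
      · have h2 : max (κ - 1 - j) 2 = 2 := by omega
        rw [h2] at ih
        have hd := stable (by omega) ih
        exact Finset.Subset.trans (suffix_mono (by omega)) hd

lemma stepk (hk : 5 ≤ κ) : suffix κ 2 ⊆ sched κ κ ∪ Qt κ κ := by
  have := step4 hk (κ - 2)
  rw [show 2 + (κ - 2) = κ by omega, show max (κ - 1 - (κ - 2)) 2 = 2 by omega] at this
  exact this

lemma leaf_mem_nbr_one {v : towerV κ} (hv : lev v = 1) (b : Fin 2) :
    (Sum.inr b : towerV κ) ∈ (towerGraph κ).neighborFinset v := by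
  exact mem_nbr.mpr (Or.inl (by rw [hv]; rfl))

lemma act_one {A : Finset (towerV κ)} (hk : 5 ≤ κ) {v : towerV κ} (hv : lev v = 1)
    {b : Fin 2} (hb : (Sum.inr b : towerV κ) ∈ A) (h2 : levelSet κ 2 ⊆ A) :
    v ∈ npStep (towerGraph κ) (strictMaj (towerGraph κ)) A := by
  rw [mem_npStep, tau_one hv (by omega)]
  have hup : levelSet κ 2 ⊆ (towerGraph κ).neighborFinset v := by
    have : levelSet κ 2 = levelSet κ (lev v + 1) := by rw [hv]
    rw [this]; exact levelSet_subset_nbr_up v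
  have hsub : levelSet κ 2 ⊆ (towerGraph κ).neighborFinset v ∩ A :=
    Finset.subset_inter hup h2
  have hss : levelSet κ 2 ⊂ (towerGraph κ).neighborFinset v ∩ A :=
    (Finset.ssubset_iff_of_subset hsub).mpr
      ⟨Sum.inr b, Finset.mem_inter.mpr ⟨leaf_mem_nbr_one hv b, hb⟩,
        fun hc => by simpa [leaf_lev] using mem_levelSet.mp hc⟩
  have hlt := Finset.card_lt_card hss
  rw [card_levelSet (by omega) (by omega)] at hlt
  omega

lemma stepk1 (hk : 5 ≤ κ) : suffix κ 1 ⊆ Qt κ (κ + 1) := by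
  have hA : suffix κ 2 ⊆ sched κ κ ∪ Qt κ κ := stepk hk
  intro v hv
  have hv' := mem_suffix.mp hv
  rw [Qt_succ]
  by_cases hc : lev v = 1
  · refine act_one hk hc (b := 0) ?_ ((levelSet_subset_suffix le_rfl).trans hA)
    exact mem_union_left' _
      (by rw [sched_kappa hk]; exact Finset.mem_singleton_self _)
  · have hA3 : suffix κ 3 ⊆ sched κ κ ∪ Qt κ κ := (suffix_mono (by omega)).trans hA
    have hd := descent (show (3:ℕ) ≤ 3 from le_rfl) (show 3 + 1 ≤ κ by omega) hA3
    exact hd (mem_suffix.mpr (by omega))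

lemma stepk2 (hk : 5 ≤ κ) : Qt κ (κ + 2) = Finset.univ := by
  apply Finset.eq_univ_of_forall
  intro v
  rw [show κ + 2 = (κ + 1) + 1 from rfl, Qt_succ]
  have hA : suffix κ 1 ⊆ sched κ (κ + 1) ∪ Qt κ (κ + 1) :=
    (stepk1 hk).trans Finset.subset_union_right
  by_cases h0 : lev v = 0
  · refine act_of_subset (X := levelSet κ 1) ?_ ?_ ?_
    · rw [← nbr_eq_of_zero h0]
    · exact (levelSet_subset_suffix le_rfl).trans hA
    · rw [tau_zero h0 (by omega), card_levelSet le_rfl (by omega)]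
  by_cases h1 : lev v = 1
  · refine act_one hk h1 (b := 1) ?_ ((levelSet_subset_suffix (by omega)).trans hA)
    exact mem_union_left' _
      (by rw [sched_kappa1 hk]; exact Finset.mem_singleton_self _)
  · have hA3 : suffix κ 3 ⊆ sched κ (κ + 1) ∪ Qt κ (κ + 1) :=
      (suffix_mono (show (1:ℕ) ≤ 3 by omega)).trans hA
    have hd := descent (show (3:ℕ) ≤ 3 from le_rfl) (show 3 + 1 ≤ κ by omega) hA3
    have hlev := lev_le v
    exact hd (mem_suffix.mpr (by omega))

end Tower4
section Tower5

variable {κ : ℕ}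

lemma leaf_ne : (Sum.inr 0 : towerV κ) ≠ Sum.inr 1 := fun h => absurd (Sum.inr.inj h) (by decide)

lemma leaf_not_mem_levelSet {b : Fin 2} {j : ℕ} (h : j ≠ 0) :
    (Sum.inr b : towerV κ) ∉ levelSet κ j := fun hc =>
  h (by simpa [leaf_lev] using (mem_levelSet.mp hc).symm)

lemma sched_eq_empty {i : ℕ} (h0 : i ≠ 0) (h2 : i ≠ 2) (hκ : i ≠ κ) (hκ1 : i ≠ κ + 1) :
    sched κ i = ∅ := by
  rw [sched, if_neg h0, if_neg h2, if_neg hκ, if_neg hκ1]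

set_option maxHeartbeats 1000000 in
lemma sched_disjoint (hk : 5 ≤ κ) {i j : ℕ} (hij : i ≠ j) :
    Disjoint (sched κ i) (sched κ j) := by
  simp only [sched]
  split_ifs <;>
    first
      | (exfalso; omega)
      | exact Finset.disjoint_empty_left _
      | exact Finset.disjoint_empty_right _
      | exact levelSet_disjoint (by omega)
      | exact Finset.disjoint_singleton_right.mpr (leaf_not_mem_levelSet (by omega))
      | exact Finset.disjoint_singleton_left.mpr (leaf_not_mem_levelSet (by omega))
      | exact Finset.disjoint_singleton.mpr leaf_ne
      | exact Finset.disjoint_singleton.mpr leaf_ne.symm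

lemma tts_sched (hk : 5 ≤ κ) : ttsSize (sched κ) (κ + 2) = 2 * κ + 1 := by
  rw [ttsSize]
  have h1 : ({0, 2, κ, κ + 1} : Finset ℕ) ⊆ Finset.range (κ + 2 + 1) := by
    intro x hx
    simp only [Finset.mem_insert, Finset.mem_singleton] at hx
    rw [Finset.mem_range]
    omega
  have h2 : ∀ i ∈ Finset.range (κ + 2 + 1), i ∉ ({0, 2, κ, κ + 1} : Finset ℕ) →
      (sched κ i).card = 0 := by
    intro i _ hni
    simp only [Finset.mem_insert, Finset.mem_singleton, not_or] at hni
    rw [sched_eq_empty hni.1 hni.2.1 hni.2.2.1 hni.2.2.2, Finset.card_empty]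
  rw [← Finset.sum_subset h1 h2]
  rw [Finset.sum_insert (by simp only [Finset.mem_insert, Finset.mem_singleton]; omega), Finset.sum_insert (by simp only [Finset.mem_insert, Finset.mem_singleton]; omega),
    Finset.sum_insert (by simp only [Finset.mem_insert, Finset.mem_singleton]; omega), Finset.sum_singleton]
  rw [sched_zero, sched_two hk, sched_kappa hk, sched_kappa1 hk,
    card_levelSet (by omega) le_rfl, card_levelSet (by omega) (by omega),
    ]
  show κ + (κ - 1 + (1 + 1)) = 2 * κ + 1
  omega

lemma MDTT_le (hk : 5 ≤ κ) :
    MDTT (towerGraph κ) (strictMaj (towerGraph κ)) ≤ 2 * κ + 1 := by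
  apply Nat.sInf_le
  refine ⟨sched κ, κ + 2, ⟨⟨?_, ?_⟩, ?_⟩, tts_sched hk⟩
  · exact sched_eq_empty (by omega) (by omega) (by omega) (by omega)
  · exact stepk2 hk
  · intro i _ j _ hij
    exact sched_disjoint hk hij

end Tower5
section Tower6

variable {κ : ℕ}

lemma nbr_eq_of_lev_eq {v w : towerV κ} (h : lev v = lev w) :
    (towerGraph κ).neighborFinset v = (towerGraph κ).neighborFinset w := by
  ext u; rw [mem_nbr, mem_nbr, h]

lemma tau_eq_of_lev_eq {v w : towerV κ} (h : lev v = lev w) :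
    strictMaj (towerGraph κ) v = strictMaj (towerGraph κ) w := by
  rw [strictMaj, strictMaj, ← SimpleGraph.card_neighborFinset_eq_degree,
    ← SimpleGraph.card_neighborFinset_eq_degree, nbr_eq_of_lev_eq h]

lemma homog_npStep {A : Finset (towerV κ)} {v w : towerV κ} (h : lev v = lev w)
    (hv : v ∈ npStep (towerGraph κ) (strictMaj (towerGraph κ)) A) :
    w ∈ npStep (towerGraph κ) (strictMaj (towerGraph κ)) A := by
  rw [mem_npStep] at hv ⊢
  rwa [← nbr_eq_of_lev_eq h, ← tau_eq_of_lev_eq h]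

noncomputable def node (κ j : ℕ) (h1 : 1 ≤ j) (h2 : j ≤ κ) : towerV κ :=
  Sum.inl ⟨⟨j - 1, by omega⟩, ⟨0, by omega⟩⟩

lemma lev_node {j : ℕ} (h1 : 1 ≤ j) (h2 : j ≤ κ) : lev (node κ j h1 h2) = j := by
  show j - 1 + 1 = j
  omega

lemma card_nbr_inter {v : towerV κ} (h : 1 ≤ lev v) (B : Finset (towerV κ)) :
    ((towerGraph κ).neighborFinset v ∩ B).card
      = (levelSet κ (lev v - 1) ∩ B).card + (levelSet κ (lev v + 1) ∩ B).card := by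
  rw [nbr_eq_of_pos h, Finset.union_inter_distrib_right,
    Finset.card_union_of_disjoint (Finset.disjoint_of_subset_left Finset.inter_subset_left
      (Finset.disjoint_of_subset_right Finset.inter_subset_left
        (levelSet_disjoint (by omega))))]

lemma pre_univ (hk : 5 ≤ κ) {B : Finset (towerV κ)}
    (hB : ∀ v w : towerV κ, lev v = lev w → v ∈ B → w ∈ B)
    (h : npStep (towerGraph κ) (strictMaj (towerGraph κ)) B = Finset.univ) :
    B = Finset.univ := by
  have getmem : ∀ {j : ℕ} {v : towerV κ}, lev v = j → 1 ≤ (levelSet κ j ∩ B).card → v ∈ B := by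
    intro j v hv hc
    obtain ⟨u, hu⟩ := Finset.card_pos.mp hc
    obtain ⟨hu1, hu2⟩ := Finset.mem_inter.mp hu
    exact hB u v (by rw [mem_levelSet.mp hu1, hv]) hu2
  have witness : ∀ (w : towerV κ), strictMaj (towerGraph κ) w
      ≤ ((towerGraph κ).neighborFinset w ∩ B).card := by
    intro w
    have hw : w ∈ npStep (towerGraph κ) (strictMaj (towerGraph κ)) B := by
      rw [h]; exact Finset.mem_univ w
    exact mem_npStep.mp hw
  apply Finset.eq_univ_of_forall
  intro v
  have hle := lev_le v
  by_cases h0 : lev v = 0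
  · -- leaves: witness of level 1
    have hw := witness (node κ 1 (by omega) (by omega))
    rw [tau_one (lev_node _ _) (by omega), card_nbr_inter (by rw [lev_node]) B] at hw
    rw [lev_node, show (1:ℕ) - 1 = 0 from rfl, show (1:ℕ) + 1 = 2 from rfl] at hw
    have hb : (levelSet κ 2 ∩ B).card ≤ 2 := by
      refine le_trans (Finset.card_le_card Finset.inter_subset_left) ?_
      rw [card_levelSet (by omega) (by omega)]
    exact getmem h0 (by omega)
  by_cases h1 : lev v = 1
  · have hw := witness (Sum.inr 0)
    rw [tau_zero (leaf_lev 0) (by omega), nbr_eq_of_zero (leaf_lev 0)] at hw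
    exact getmem h1 hw
  by_cases h2 : lev v = 2
  · have hw := witness (node κ 1 (by omega) (by omega))
    rw [tau_one (lev_node _ _) (by omega), card_nbr_inter (by rw [lev_node]) B] at hw
    rw [lev_node, show (1:ℕ) - 1 = 0 from rfl, show (1:ℕ) + 1 = 2 from rfl] at hw
    have hb : (levelSet κ 0 ∩ B).card ≤ 2 := by
      refine le_trans (Finset.card_le_card Finset.inter_subset_left) ?_
      rw [card_levelSet_zero]
    exact getmem h2 (by omega)
  · -- 3 ≤ lev v ≤ κ : witness of level (lev v) - 1 which is in [2, κ-1]
    set j := lev v with hj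
    have h3 : 3 ≤ j := by omega
    have hw := witness (node κ (j - 1) (by omega) (by omega))
    rw [tau_interior (by rw [lev_node]; omega) (by rw [lev_node]; omega),
      card_nbr_inter (by rw [lev_node]; omega) B] at hw
    rw [lev_node] at hw
    have hb : (levelSet κ (j - 1 - 1) ∩ B).card ≤ j - 2 := by
      refine le_trans (Finset.card_le_card Finset.inter_subset_left) ?_
      rw [card_levelSet (by omega) (by omega)]
      omega
    have hj2 : j - 1 + 1 = j := by omega
    rw [hj2] at hw
    exact getmem hj.symm (by omega)

lemma chain (hk : 5 ≤ κ) :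
    ∀ (i : ℕ) (A : Finset (towerV κ)),
      (npStep (towerGraph κ) (strictMaj (towerGraph κ)))^[i]
        (npStep (towerGraph κ) (strictMaj (towerGraph κ)) A) = Finset.univ →
      npStep (towerGraph κ) (strictMaj (towerGraph κ)) A = Finset.univ := by
  intro i
  induction i with
  | zero => intro A h; simpa using h
  | succ n ih =>
      intro A h
      rw [Function.iterate_succ_apply] at h
      have := ih _ h
      exact pre_univ hk (fun v w hvw hv => homog_npStep hvw hv) this

lemma npStep_univ (hk : 5 ≤ κ) :
    npStep (towerGraph κ) (strictMaj (towerGraph κ)) Finset.univ = Finset.univ := by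
  apply Finset.eq_univ_of_forall
  intro v
  rw [mem_npStep, Finset.inter_univ, SimpleGraph.card_neighborFinset_eq_degree]
  have hle := lev_le v
  by_cases h0 : lev v = 0
  · rw [tau_zero h0 (by omega), degree_zero h0 (by omega)]
  by_cases h1 : lev v = 1
  · rw [tau_one h1 (by omega), degree_eq (by omega), h1, card_levelSet_zero,
      card_levelSet (show 1 ≤ 1 + 1 by omega) (by omega)]
    omega
  by_cases htop : lev v = κ
  · rw [tau_top htop (by omega), degree_eq (by omega), htop,
      levelSet_eq_empty (show κ < κ + 1 by omega),
      card_levelSet (show 1 ≤ κ - 1 by omega) (show κ - 1 ≤ κ by omega)]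
    simp only [Finset.card_empty]
    omega
  · rw [tau_interior (show 2 ≤ lev v by omega) (show lev v + 1 ≤ κ by omega),
      degree_eq (by omega),
      card_levelSet (show 1 ≤ lev v - 1 by omega) (show lev v - 1 ≤ κ by omega),
      card_levelSet (show 1 ≤ lev v + 1 by omega) (show lev v + 1 ≤ κ by omega)]
    omega

lemma gauss2 : ∀ n : ℕ, 2 ≤ n → (∑ ℓ ∈ Finset.Icc 2 n, (ℓ + 1)) * 2 = (n + 4) * (n - 1) := by
  intro n
  induction n with
  | zero => omega
  | succ m ih =>
      intro h
      rcases Nat.lt_or_ge m 2 with hm | hm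
      · interval_cases m
        · omega
        · norm_num [Finset.Icc_self]
      · rw [Finset.sum_Icc_succ_top (by omega), Nat.add_mul, ih hm]
        obtain ⟨k, rfl⟩ := Nat.exists_eq_add_of_le hm
        have e1 : 2 + k - 1 = k + 1 := by omega
        have e2 : 2 + k + 1 - 1 = 2 + k := by omega
        rw [e1, e2]
        ring

lemma card_bound (hk : 5 ≤ κ) {S : Finset (towerV κ)}
    (h : npStep (towerGraph κ) (strictMaj (towerGraph κ)) S = Finset.univ) :
    (κ + 3) * (κ - 2) ≤ 4 * S.card := by
  have key : ∀ ℓ ∈ Finset.Icc 2 (κ - 1),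
      ℓ + 1 ≤ (levelSet κ (ℓ - 1) ∩ S).card + (levelSet κ (ℓ + 1) ∩ S).card := by
    intro ℓ hℓ
    rw [Finset.mem_Icc] at hℓ
    have hw : node κ ℓ (by omega) (by omega) ∈
        npStep (towerGraph κ) (strictMaj (towerGraph κ)) S := by
      rw [h]; exact Finset.mem_univ _
    rw [mem_npStep, tau_interior (by rw [lev_node]; omega) (by rw [lev_node]; omega),
      card_nbr_inter (by rw [lev_node]; omega) S, lev_node] at hw
    exact hw
  have hsum := Finset.sum_le_sum key
  rw [Finset.sum_add_distrib, Finset.sum_add_distrib] at hsum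
  have hb1 : ∑ ℓ ∈ Finset.Icc 2 (κ - 1), (levelSet κ (ℓ - 1) ∩ S).card ≤ S.card := by
    rw [← Finset.card_biUnion (fun x hx y hy hxy =>
      Finset.disjoint_of_subset_left Finset.inter_subset_left
        (Finset.disjoint_of_subset_right Finset.inter_subset_left
          (levelSet_disjoint (by simp only [Finset.coe_Icc, Set.mem_Icc, Finset.mem_coe, Finset.mem_Icc] at hx hy; omega))))]
    exact Finset.card_le_card (Finset.biUnion_subset.mpr
      (fun x _ => Finset.inter_subset_right))
  have hb2 : ∑ ℓ ∈ Finset.Icc 2 (κ - 1), (levelSet κ (ℓ + 1) ∩ S).card ≤ S.card := by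
    rw [← Finset.card_biUnion (fun x hx y hy hxy =>
      Finset.disjoint_of_subset_left Finset.inter_subset_left
        (Finset.disjoint_of_subset_right Finset.inter_subset_left
          (levelSet_disjoint (by omega))))]
    exact Finset.card_le_card (Finset.biUnion_subset.mpr
      (fun x _ => Finset.inter_subset_right))
  have hg := gauss2 (κ - 1) (by omega)
  rw [Finset.sum_add_distrib] at hg
  have h2 : (κ - 1 + 4) * (κ - 1 - 1) ≤ 4 * S.card := by omega
  calc (κ + 3) * (κ - 2) = (κ - 1 + 4) * (κ - 1 - 1) := by
        congr 1 <;> omega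
    _ ≤ 4 * S.card := h2

lemma MT_ge (hk : 5 ≤ κ) :
    (κ + 3) * (κ - 2) ≤ 4 * MT (towerGraph κ) (strictMaj (towerGraph κ)) := by
  have hne : {m | ∃ S : Finset (towerV κ),
      IsTS (towerGraph κ) (strictMaj (towerGraph κ)) S ∧ S.card = m}.Nonempty :=
    ⟨(Finset.univ : Finset (towerV κ)).card, Finset.univ, ⟨0, rfl⟩, rfl⟩
  obtain ⟨S, hS, hcard⟩ := Nat.sInf_mem hne
  obtain ⟨i, hi⟩ := hS
  have hstep : npStep (towerGraph κ) (strictMaj (towerGraph κ)) S = Finset.univ := by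
    cases i with
    | zero =>
        simp only [Function.iterate_zero, id_eq] at hi
        rw [hi]; exact npStep_univ hk
    | succ n =>
        rw [Function.iterate_succ_apply] at hi
        exact chain hk n S hi
  have := card_bound hk hstep
  rw [MT]
  omega

end Tower6
/-- Theorem 1: There are arbitrarily large graphs (the tower graphs `G_κ`,
whose number of nodes grows with `κ`) with strict majority thresholds for which the
minimum ordinary target set size is `ω` of the minimum disjoint timed target set size:
for every constant `C` the former eventually exceeds `C` times the latter. -/
theorem stmt10 :
    (∀ κ : ℕ, κ ≤ Fintype.card (towerV κ)) ∧
    ∀ C : ℝ, ∃ κ₀ : ℕ, ∀ κ : ℕ, κ₀ ≤ κ →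
      C * (MDTT (towerGraph κ) (strictMaj (towerGraph κ)) : ℝ)
        ≤ (MT (towerGraph κ) (strictMaj (towerGraph κ)) : ℝ) := by
  constructor
  · intro κ
    rcases Nat.eq_zero_or_pos κ with h | h
    · omega
    · calc κ = (levelSet κ κ).card := (card_levelSet h le_rfl).symm
        _ ≤ (Finset.univ : Finset (towerV κ)).card := Finset.card_le_univ _
        _ = Fintype.card (towerV κ) := Finset.card_univ
  · intro C
    rcases le_or_gt C 0 with hC | hC
    · refine ⟨5, fun κ _ => ?_⟩
      have h1 : C * (MDTT (towerGraph κ) (strictMaj (towerGraph κ)) : ℝ) ≤ 0 := by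
        have := mul_le_mul_of_nonneg_right hC
          (Nat.cast_nonneg (MDTT (towerGraph κ) (strictMaj (towerGraph κ))) : (0:ℝ) ≤ _)
        simpa using this
      exact h1.trans (Nat.cast_nonneg _)
    · refine ⟨48 * ⌈C⌉₊ + 53, fun κ hκ => ?_⟩
      set n := ⌈C⌉₊ with hn
      have hk5 : 5 ≤ κ := by omega
      have h1 : (MDTT (towerGraph κ) (strictMaj (towerGraph κ)) : ℝ) ≤ 2 * κ + 1 := by
        have : ((MDTT (towerGraph κ) (strictMaj (towerGraph κ)) : ℕ) : ℝ) ≤ ((2 * κ + 1 : ℕ) : ℝ) := Nat.cast_le.mpr (MDTT_le hk5)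
        push_cast at this
        linarith
      have h2 : ((κ : ℝ) + 3) * ((κ : ℝ) - 2)
          ≤ 4 * (MT (towerGraph κ) (strictMaj (towerGraph κ)) : ℝ) := by
        have : (((κ + 3) * (κ - 2) : ℕ) : ℝ) ≤ ((4 * MT (towerGraph κ) (strictMaj (towerGraph κ)) : ℕ) : ℝ) := Nat.cast_le.mpr (MT_ge hk5)
        push_cast [Nat.cast_sub (show 2 ≤ κ by omega)] at this
        linarith
      have hCn : C ≤ (n : ℝ) := Nat.le_ceil C
      have hκR : (48 * (n : ℝ) + 53) ≤ (κ : ℝ) := by exact_mod_cast hκ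
      have hD0 : (0:ℝ) ≤ (MDTT (towerGraph κ) (strictMaj (towerGraph κ)) : ℝ) :=
        Nat.cast_nonneg _
      have hn0 : (0:ℝ) ≤ (n : ℝ) := Nat.cast_nonneg _
      have step1 : C * (MDTT (towerGraph κ) (strictMaj (towerGraph κ)) : ℝ)
          ≤ (n : ℝ) * (2 * κ + 1) := by
        calc C * (MDTT (towerGraph κ) (strictMaj (towerGraph κ)) : ℝ)
            ≤ C * (2 * κ + 1) := by nlinarith
          _ ≤ (n : ℝ) * (2 * κ + 1) := by nlinarith
      refine step1.trans ?_
      nlinarith [sq_nonneg ((κ : ℝ) - 48 * n - 53), mul_nonneg hn0 (by linarith : (0:ℝ) ≤ (κ:ℝ))]
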